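/- Let q1, q2 be elements of a field with q = q1 q2, all of q1^{1/2}, q2^{1/2} existing, and let ζ(x) = (1-xq1)(1-xq2)/((1-x)(1-xq)). Then for any n ≥ 1, the symmetrization Sym[∏_{1≤i<j≤n} ζ(z_i/z_j)] · ∏_{1≤i<j≤n} (z_i - z_j q)(z_j - z_i q) is a symmetric Laurent polynomial in z_1,...,z_n (i.e. all poles at z_i = z_j cancel upon symmetrization). -/

import Mathlib

open MvPolynomial Finset
namespace Stmt2Aux


def Pn (n : ℕ) : Finset (Fin n × Fin n) :=
  Finset.univ.filter fun pr : Fin n × Fin n => pr.1 < pr.2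

lemma prod_P_eq_double {M : Type*} [CommMonoid M] {n : ℕ} (g : Fin n → Fin n → M) :
    ∏ pr ∈ Pn n, g pr.1 pr.2 = ∏ i, ∏ j ∈ Finset.Ioi i, g i j :=
  Finset.prod_finset_product' _ _ _ (by simp [Pn])

lemma prod_P_comp {M : Type*} [CommMonoid M] {n : ℕ} (σ : Equiv.Perm (Fin n))
    (g : Fin n → Fin n → M) (hg : ∀ a b, g a b = g b a) :
    ∏ pr ∈ Pn n, g (σ pr.1) (σ pr.2) = ∏ pr ∈ Pn n, g pr.1 pr.2 := by
  refine Finset.prod_nbij'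
    (fun pr => if σ pr.1 < σ pr.2 then (σ pr.1, σ pr.2) else (σ pr.2, σ pr.1))
    (fun pr => if σ⁻¹ pr.1 < σ⁻¹ pr.2 then (σ⁻¹ pr.1, σ⁻¹ pr.2) else (σ⁻¹ pr.2, σ⁻¹ pr.1))
    ?_ ?_ ?_ ?_ ?_
  · intro pr hpr
    simp only [Pn, Finset.mem_filter, Finset.mem_univ, true_and] at hpr ⊢
    have hne : σ pr.1 ≠ σ pr.2 := fun h => absurd (σ.injective h) (ne_of_lt hpr)
    split_ifs with h
    · exact h
    · exact lt_of_le_of_ne (not_lt.mp h) hne.symm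
  · intro pr hpr
    simp only [Pn, Finset.mem_filter, Finset.mem_univ, true_and] at hpr ⊢
    have hne : σ⁻¹ pr.1 ≠ σ⁻¹ pr.2 := fun h => absurd (σ⁻¹.injective h) (ne_of_lt hpr)
    split_ifs with h
    · exact h
    · exact lt_of_le_of_ne (not_lt.mp h) hne.symm
  · intro pr hpr
    simp only [Pn, Finset.mem_filter, Finset.mem_univ, true_and] at hpr
    split_ifs with h h2 h3 <;>
      simp_all [Equiv.symm_apply_apply, Prod.ext_iff] <;> omega
  · intro pr hpr
    simp only [Pn, Finset.mem_filter, Finset.mem_univ, true_and] at hpr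
    split_ifs with h h2 h3 <;>
      simp_all [Equiv.apply_symm_apply, Prod.ext_iff] <;> omega
  · intro pr hpr
    split_ifs with h
    · rfl
    · exact hg _ _

variable {K : Type*} [Field K] {n : ℕ}

noncomputable def vand (K : Type*) [Field K] (n : ℕ) : MvPolynomial (Fin n) K :=
  ∏ pr ∈ Pn n, (X pr.2 - X pr.1)

lemma rename_vand (σ : Equiv.Perm (Fin n)) :
    rename σ (vand K n)
      = ((Equiv.Perm.sign σ : ℤ) : MvPolynomial (Fin n) K) * vand K n := by
  have key : ∀ v : Fin n → MvPolynomial (Fin n) K,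
      ∏ pr ∈ Pn n, (v pr.2 - v pr.1) = (Matrix.vandermonde v).det := by
    intro v; rw [Matrix.det_vandermonde]
    exact prod_P_eq_double (fun i j => v j - v i)
  have h2 : Matrix.vandermonde (fun k => (X (σ k) : MvPolynomial (Fin n) K))
      = (Matrix.vandermonde (X : Fin n → MvPolynomial (Fin n) K)).submatrix σ id := by
    ext a b; simp [Matrix.vandermonde]
  have h0 : rename σ (vand K n) = ∏ pr ∈ Pn n,
      ((X (σ pr.2) : MvPolynomial (Fin n) K) - X (σ pr.1)) := by
    rw [vand, map_prod]; simp [rename_X]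
  rw [h0, key (fun k => X (σ k)), h2, Matrix.det_permute, ← key X, vand]




/-- the K-algebra map collapsing X j to X i -/
noncomputable def phi (K : Type*) [Field K] {n : ℕ} (i j : Fin n) :
    MvPolynomial (Fin n) K →ₐ[K] MvPolynomial (Fin n) K :=
  aeval fun k => if k = j then X i else X k

lemma phi_X_j (i j : Fin n) : phi K i j (X j) = X i := by simp [phi]

lemma phi_X_ne (i : Fin n) {j k : Fin n} (h : k ≠ j) : phi K i j (X k) = X k := by
  simp [phi, h]

lemma dvd_sub_phi (i j : Fin n) (r : MvPolynomial (Fin n) K) :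
    (X j - X i : MvPolynomial (Fin n) K) ∣ r - phi K i j r := by
  induction r using MvPolynomial.induction_on with
  | C a => simp [phi, aeval_C, algebraMap_eq]
  | add p q hp hq =>
      have : p + q - phi K i j (p + q) = (p - phi K i j p) + (q - phi K i j q) := by
        rw [map_add]; ring
      rw [this]; exact dvd_add hp hq
  | mul_X p k hp =>
      rw [map_mul]
      by_cases hk : k = j
      · subst hk
        rw [phi_X_j]
        have : p * X k - phi K i k p * X i
            = (p - phi K i k p) * X k + phi K i k p * (X k - X i) := by ring
        rw [this]
        exact dvd_add (hp.mul_right _) (Dvd.intro_left _ rfl)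
      · rw [phi_X_ne _ hk]
        have : p * X k - phi K i j p * X k = (p - phi K i j p) * X k := by ring
        rw [this]; exact hp.mul_right _

lemma X_sub_X_ne {a b : Fin n} (hab : a ≠ b) :
    (X b - X a : MvPolynomial (Fin n) K) ≠ 0 :=
  sub_ne_zero.mpr fun h => hab (X_injective h).symm

lemma phi_eq_zero_iff_dvd {i j : Fin n} (hij : i ≠ j) (r : MvPolynomial (Fin n) K) :
    phi K i j r = 0 ↔ (X j - X i : MvPolynomial (Fin n) K) ∣ r := by
  constructor
  · intro h
    have := dvd_sub_phi i j r
    rwa [h, sub_zero] at this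
  · rintro ⟨s, rfl⟩
    rw [map_mul, map_sub, phi_X_j, phi_X_ne _ hij]
    simp

lemma prime_X_sub_X {i j : Fin n} (hij : i ≠ j) :
    Prime (X j - X i : MvPolynomial (Fin n) K) := by
  refine ⟨X_sub_X_ne hij, ?_, ?_⟩
  · intro hu
    obtain ⟨v, hv⟩ := hu.exists_right_inv
    have := congrArg (phi K i j) hv
    rw [map_mul, map_one, map_sub, phi_X_j, phi_X_ne _ hij] at this
    simp at this
  · intro a b hab
    rw [← phi_eq_zero_iff_dvd hij a, ← phi_eq_zero_iff_dvd hij b]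
    rw [← phi_eq_zero_iff_dvd hij, map_mul] at hab
    exact mul_eq_zero.mp hab

lemma not_dvd_pair {a b c d : Fin n} (hab : a < b) (hcd : c < d)
    (hne : (a, b) ≠ (c, d)) :
    ¬ (X b - X a : MvPolynomial (Fin n) K) ∣ (X d - X c) := by
  intro hdvd
  rw [← phi_eq_zero_iff_dvd (ne_of_lt hab)] at hdvd
  rw [map_sub] at hdvd
  by_cases hd : d = b
  · subst hd
    have hc : c ≠ d := ne_of_lt hcd
    rw [phi_X_j, phi_X_ne _ hc] at hdvd
    have : a = c := X_injective (sub_eq_zero.mp hdvd)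
    exact hne (by simp [this, Prod.ext_iff])
  · rw [phi_X_ne _ hd] at hdvd
    by_cases hc : c = b
    · subst hc
      rw [phi_X_j] at hdvd
      have : d = a := X_injective (sub_eq_zero.mp hdvd)
      omega
    · rw [phi_X_ne _ hc] at hdvd
      have : d = c := X_injective (sub_eq_zero.mp hdvd)
      omega

lemma prod_primes_dvd' {ι : Type*} [DecidableEq ι] (s : Finset ι)
    (f : ι → MvPolynomial (Fin n) K)
    (hp : ∀ e ∈ s, Prime (f e))
    (hnd : ∀ e₁ ∈ s, ∀ e₂ ∈ s, e₁ ≠ e₂ → ¬ f e₁ ∣ f e₂) :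
    ∀ m : MvPolynomial (Fin n) K, (∀ e ∈ s, f e ∣ m) → (∏ e ∈ s, f e) ∣ m := by
  induction s using Finset.induction_on with
  | empty => intro m _; simp
  | insert a s ha ih =>
      intro m hm
      obtain ⟨m', hm'⟩ := hm a (Finset.mem_insert_self a s)
      rw [Finset.prod_insert ha, hm']
      refine mul_dvd_mul_left _ (ih (fun e he => hp e (Finset.mem_insert_of_mem he))
        (fun e₁ h₁ e₂ h₂ => hnd e₁ (Finset.mem_insert_of_mem h₁) e₂ (Finset.mem_insert_of_mem h₂))
        m' ?_)
      intro e he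
      have hdvd : f e ∣ f a * m' := hm' ▸ hm e (Finset.mem_insert_of_mem he)
      rcases (hp e (Finset.mem_insert_of_mem he)).2.2 _ _ hdvd with h | h
      · exact absurd h (hnd e (Finset.mem_insert_of_mem he) a (Finset.mem_insert_self a s)
          (fun hea => ha (hea ▸ he)))
      · exact h


lemma phi_rename_swap {i j : Fin n} (hij : i ≠ j) (r : MvPolynomial (Fin n) K) :
    phi K i j (rename ⇑(Equiv.swap i j) r) = phi K i j r := by
  have hfun : (fun k => if k = j then (X i : MvPolynomial (Fin n) K) else X k) ∘ ⇑(Equiv.swap i j)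
      = fun k => if k = j then (X i : MvPolynomial (Fin n) K) else X k := by
    funext k
    rcases eq_or_ne k i with rfl | hki
    · simp [Equiv.swap_apply_left, hij]
    rcases eq_or_ne k j with rfl | hkj
    · simp [Equiv.swap_apply_right, hij, (Ne.symm hij)]
    · simp [Equiv.swap_apply_of_ne_of_ne hki hkj, hkj]
  rw [phi, aeval_rename, hfun]

noncomputable def Gpoly (K : Type*) [Field K] (n : ℕ) (q1 q2 : K) : MvPolynomial (Fin n) K :=
  ∏ pr ∈ Pn n, ((X pr.2 - C q1 * X pr.1) *
    ((X pr.2 - C q2 * X pr.1) * (X pr.1 - C (q1 * q2) * X pr.2)))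

noncomputable def Mpoly (K : Type*) [Field K] (n : ℕ) (q1 q2 : K) : MvPolynomial (Fin n) K :=
  ∑ σ : Equiv.Perm (Fin n),
    ((Equiv.Perm.sign σ : ℤ) : MvPolynomial (Fin n) K) * rename ⇑σ (Gpoly K n q1 q2)

lemma dvd_sub_rename_swap {i j : Fin n} (hij : i ≠ j) (r : MvPolynomial (Fin n) K) :
    (X j - X i : MvPolynomial (Fin n) K) ∣ r - rename ⇑(Equiv.swap i j) r := by
  have h1 := dvd_sub_phi i j r
  have h2 := dvd_sub_phi i j (rename ⇑(Equiv.swap i j) r)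
  have h3 := phi_rename_swap hij r
  have : r - rename ⇑(Equiv.swap i j) r
      = (r - phi K i j r) - (rename ⇑(Equiv.swap i j) r - phi K i j (rename ⇑(Equiv.swap i j) r)) := by
    rw [h3]; ring
  rw [this]
  exact dvd_sub h1 h2

set_option synthInstance.maxHeartbeats 1000000 in
lemma vand_dvd_M (q1 q2 : K) : vand K n ∣ Mpoly K n q1 q2 := by
  rw [vand]
  apply prod_primes_dvd' (Pn n) (fun pr : Fin n × Fin n => X pr.2 - X pr.1)
  · intro e he
    simp only [Pn, Finset.mem_filter, Finset.mem_univ, true_and] at he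
    exact prime_X_sub_X (ne_of_lt he)
  · intro e₁ h₁ e₂ h₂ hne
    simp only [Pn, Finset.mem_filter, Finset.mem_univ, true_and] at h₁ h₂
    exact not_dvd_pair h₁ h₂ (by simpa [Prod.ext_iff] using hne)
  · intro e he
    simp only [Pn, Finset.mem_filter, Finset.mem_univ, true_and] at he
    have hij : e.1 ≠ e.2 := ne_of_lt he
    set i := e.1
    set j := e.2
    rw [← Ideal.Quotient.eq_zero_iff_dvd, Mpoly, map_sum]
    refine Finset.sum_involution (fun σ _ => Equiv.swap i j * σ) ?_ ?_ (fun σ _ => Finset.mem_univ _) ?_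
    · intro σ _
      rw [← map_add, Ideal.Quotient.eq_zero_iff_dvd]
      have hsign : ((Equiv.Perm.sign (Equiv.swap i j * σ) : ℤ) : MvPolynomial (Fin n) K)
          = -((Equiv.Perm.sign σ : ℤ) : MvPolynomial (Fin n) K) := by
        rw [Equiv.Perm.sign_mul, Equiv.Perm.sign_swap hij]
        push_cast
        ring
      have hren : rename ⇑(Equiv.swap i j * σ) (Gpoly K n q1 q2)
          = rename ⇑(Equiv.swap i j) (rename ⇑σ (Gpoly K n q1 q2)) := by
        rw [rename_rename, ← Equiv.Perm.coe_mul]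
      rw [hsign, hren]
      have : ((Equiv.Perm.sign σ : ℤ) : MvPolynomial (Fin n) K) * rename ⇑σ (Gpoly K n q1 q2) +
          -((Equiv.Perm.sign σ : ℤ) : MvPolynomial (Fin n) K) *
            rename ⇑(Equiv.swap i j) (rename ⇑σ (Gpoly K n q1 q2))
          = ((Equiv.Perm.sign σ : ℤ) : MvPolynomial (Fin n) K) *
            (rename ⇑σ (Gpoly K n q1 q2) -
              rename ⇑(Equiv.swap i j) (rename ⇑σ (Gpoly K n q1 q2))) := by ring
      rw [this]
      exact Dvd.dvd.mul_left (dvd_sub_rename_swap hij _) _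
    · intro σ _ _ h
      have ht : Equiv.swap i j = 1 := by
        have := congrArg (fun π => π * σ⁻¹) h
        simpa using this
      have := congrArg (fun e : Equiv.Perm (Fin n) => e i) ht
      simp [Equiv.swap_apply_left] at this
      exact hij this.symm
    · intro σ _
      rw [← mul_assoc, Equiv.swap_mul_self, one_mul]

lemma sign_cast_sq (τ : Equiv.Perm (Fin n)) :
    ((Equiv.Perm.sign τ : ℤ) : MvPolynomial (Fin n) K) *
      ((Equiv.Perm.sign τ : ℤ) : MvPolynomial (Fin n) K) = 1 := by
  rcases Int.units_eq_one_or (Equiv.Perm.sign τ) with h | h <;> simp [h]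

lemma sign_cast_ne_zero (τ : Equiv.Perm (Fin n)) :
    ((Equiv.Perm.sign τ : ℤ) : MvPolynomial (Fin n) K) ≠ 0 := by
  rcases Int.units_eq_one_or (Equiv.Perm.sign τ) with h | h <;> simp [h]

lemma rename_M (q1 q2 : K) (τ : Equiv.Perm (Fin n)) :
    rename ⇑τ (Mpoly K n q1 q2)
      = ((Equiv.Perm.sign τ : ℤ) : MvPolynomial (Fin n) K) * Mpoly K n q1 q2 := by
  rw [Mpoly, map_sum, Finset.mul_sum]
  refine Fintype.sum_equiv (Equiv.mulLeft τ) _ _ ?_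
  intro σ
  have hsg : ((Equiv.Perm.sign (τ * σ) : ℤ) : MvPolynomial (Fin n) K)
      = ((Equiv.Perm.sign τ : ℤ) : MvPolynomial (Fin n) K) *
        ((Equiv.Perm.sign σ : ℤ) : MvPolynomial (Fin n) K) := by
    rw [Equiv.Perm.sign_mul]
    push_cast
    ring
  rw [map_mul, map_intCast, rename_rename, ← Equiv.Perm.coe_mul]
  simp only [Equiv.coe_mulLeft]
  linear_combination
    (-(((Equiv.Perm.sign τ : ℤ) : MvPolynomial (Fin n) K) *
        rename ⇑(τ * σ) (Gpoly K n q1 q2))) * hsg +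
    (-(((Equiv.Perm.sign σ : ℤ) : MvPolynomial (Fin n) K) *
        rename ⇑(τ * σ) (Gpoly K n q1 q2))) * sign_cast_sq (K := K) (n := n) τ

lemma vand_ne_zero : vand K n ≠ 0 := by
  rw [vand]
  refine Finset.prod_ne_zero_iff.mpr fun e he => ?_
  simp only [Pn, Finset.mem_filter, Finset.mem_univ, true_and] at he
  exact X_sub_X_ne (ne_of_lt he)

lemma exists_p (q1 q2 : K) :
    ∃ p : MvPolynomial (Fin n) K, (∀ τ : Equiv.Perm (Fin n), rename ⇑τ p = p) ∧
      Mpoly K n q1 q2 = vand K n * p := by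
  obtain ⟨p, hp⟩ := vand_dvd_M (K := K) (n := n) q1 q2
  refine ⟨p, fun τ => ?_, hp⟩
  have h2 := rename_M q1 q2 τ
  rw [hp, map_mul, rename_vand] at h2
  have h3 : ((Equiv.Perm.sign τ : ℤ) : MvPolynomial (Fin n) K) *
      (vand K n * rename ⇑τ p) = ((Equiv.Perm.sign τ : ℤ) : MvPolynomial (Fin n) K) *
      (vand K n * p) := by linear_combination h2
  have h4 := mul_left_cancel₀ (sign_cast_ne_zero τ) h3
  exact mul_left_cancel₀ (vand_ne_zero) h4


lemma X_sub_CX_ne (c : K) {a b : Fin n} (hab : a ≠ b) :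
    (X b - C c * X a : MvPolynomial (Fin n) K) ≠ 0 := by
  intro h
  have h1 := congrArg (coeff (Finsupp.single b 1)) h
  classical
  rw [coeff_sub, coeff_C_mul, coeff_X', coeff_X', if_pos rfl, if_neg, coeff_zero] at h1
  · simp at h1
  · intro hcon
    exact hab ((Finsupp.single_left_inj one_ne_zero).mp hcon)

noncomputable def Gnum (K : Type*) [Field K] (n : ℕ) (q1 q2 : K) : MvPolynomial (Fin n) K :=
  ∏ pr ∈ Pn n, ((X pr.2 - C q1 * X pr.1) * (X pr.2 - C q2 * X pr.1))

noncomputable def Dq (K : Type*) [Field K] (n : ℕ) (q : K) : MvPolynomial (Fin n) K :=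
  ∏ pr ∈ Pn n, (X pr.2 - C q * X pr.1)

noncomputable def Dq' (K : Type*) [Field K] (n : ℕ) (q : K) : MvPolynomial (Fin n) K :=
  ∏ pr ∈ Pn n, (X pr.1 - C q * X pr.2)

noncomputable def Wp (K : Type*) [Field K] (n : ℕ) (q : K) : MvPolynomial (Fin n) K :=
  ∏ pr ∈ Pn n, ((X pr.1 - C q * X pr.2) * (X pr.2 - C q * X pr.1))

lemma Wp_eq (q : K) : Wp K n q = Dq' K n q * Dq K n q := by
  rw [Wp, Dq', Dq, Finset.prod_mul_distrib]

lemma Gpoly_eq (q1 q2 : K) :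
    Gpoly K n q1 q2 = Gnum K n q1 q2 * Dq' K n (q1 * q2) := by
  rw [Gpoly, Gnum, Dq', Finset.prod_mul_distrib, Finset.prod_mul_distrib,
    Finset.prod_mul_distrib]
  ring

lemma rename_Gnum (q1 q2 : K) (σ : Equiv.Perm (Fin n)) :
    rename ⇑σ (Gnum K n q1 q2)
      = ∏ pr ∈ Pn n, ((X (σ pr.2) - C q1 * X (σ pr.1)) * (X (σ pr.2) - C q2 * X (σ pr.1))) := by
  rw [Gnum, map_prod]; simp

lemma rename_Dq (q : K) (σ : Equiv.Perm (Fin n)) :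
    rename ⇑σ (Dq K n q) = ∏ pr ∈ Pn n, (X (σ pr.2) - C q * X (σ pr.1)) := by
  rw [Dq, map_prod]; simp

lemma rename_Wp (q : K) (σ : Equiv.Perm (Fin n)) :
    rename ⇑σ (Wp K n q) = Wp K n q := by
  rw [Wp, map_prod]
  simp only [map_mul, map_sub, rename_X, rename_C]
  exact prod_P_comp σ
    (fun a b => ((X a : MvPolynomial (Fin n) K) - C q * X b) * (X b - C q * X a))
    (fun a b => by ring)

lemma Dq_ne_zero (q : K) (σ : Equiv.Perm (Fin n)) :
    rename ⇑σ (Dq K n q) ≠ 0 := by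
  rw [rename_Dq]
  refine Finset.prod_ne_zero_iff.mpr fun e he => ?_
  simp only [Pn, Finset.mem_filter, Finset.mem_univ, true_and] at he
  exact X_sub_CX_ne _ fun h => (ne_of_lt he) (σ.injective h)

lemma sign_cast_sq' {F : Type*} [Field F] (τ : Equiv.Perm (Fin n)) :
    ((Equiv.Perm.sign τ : ℤ) : F) * ((Equiv.Perm.sign τ : ℤ) : F) = 1 := by
  rcases Int.units_eq_one_or (Equiv.Perm.sign τ) with h | h <;> simp [h]

lemma rename_vand_prod (σ : Equiv.Perm (Fin n)) :
    rename ⇑σ (vand K n) = ∏ pr ∈ Pn n, ((X (σ pr.2) : MvPolynomial (Fin n) K) - X (σ pr.1)) := by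
  rw [vand, map_prod]; simp

end Stmt2Aux

open Stmt2Aux in
/-- in the field of rational functions in z_1,...,z_n over K
(q1, q2 ∈ K, q = q1q2), the element
Sym[∏_{i<j} ζ(z_i/z_j)] · ∏_{i<j} (z_i - q z_j)(z_j - q z_i),
where ζ(x) = (1-xq1)(1-xq2)/((1-x)(1-xq)) and Sym sums over all permutations,
is a symmetric Laurent polynomial: it equals p/(z_1⋯z_n)^d for some d and some
symmetric polynomial p. -/
theorem stmt_2 (K : Type*) [Field K] (q1 q2 : K) (n : ℕ)
    (L : Type*) [Field L] [Algebra (MvPolynomial (Fin n) K) L]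
    [IsFractionRing (MvPolynomial (Fin n) K) L]
    (Z : Fin n → L) (hZ : ∀ i, Z i = algebraMap (MvPolynomial (Fin n) K) L (X i))
    (zeta : L → L)
    (hzeta : ∀ x : L,
      zeta x = ((1 - x * algebraMap (MvPolynomial (Fin n) K) L (C q1)) *
          (1 - x * algebraMap (MvPolynomial (Fin n) K) L (C q2))) /
        ((1 - x) * (1 - x * algebraMap (MvPolynomial (Fin n) K) L (C (q1 * q2))))) :
    ∃ (p : MvPolynomial (Fin n) K) (d : ℕ),
      (∀ σ : Equiv.Perm (Fin n), rename σ p = p) ∧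
      (∑ σ : Equiv.Perm (Fin n),
          ∏ pr ∈ Finset.univ.filter (fun pr : Fin n × Fin n => pr.1 < pr.2),
            zeta (Z (σ pr.1) / Z (σ pr.2))) *
        (∏ pr ∈ Finset.univ.filter (fun pr : Fin n × Fin n => pr.1 < pr.2),
          ((Z pr.1 - algebraMap (MvPolynomial (Fin n) K) L (C (q1 * q2)) * Z pr.2) *
            (Z pr.2 - algebraMap (MvPolynomial (Fin n) K) L (C (q1 * q2)) * Z pr.1))) *
        (∏ i, Z i) ^ d
      = algebraMap (MvPolynomial (Fin n) K) L p := by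
  classical
  obtain ⟨p, hsymm, hM⟩ := Stmt2Aux.exists_p (K := K) (n := n) q1 q2
  refine ⟨p, 0, fun σ => hsymm σ, ?_⟩
  rw [pow_zero, mul_one]
  set f := algebraMap (MvPolynomial (Fin n) K) L with hf
  have finj : Function.Injective f := IsFractionRing.injective _ _
  have fne : ∀ {a : MvPolynomial (Fin n) K}, a ≠ 0 → f a ≠ 0 := by
    intro a ha h
    exact ha (finj (by rw [h, map_zero]))
  have hPn : (Finset.univ.filter (fun pr : Fin n × Fin n => pr.1 < pr.2)) = Pn n := rfl
  rw [hPn]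
  -- per-pair description of zeta
  have hzp : ∀ a b : Fin n, a ≠ b →
      zeta (Z a / Z b) =
        f ((X b - C q1 * X a) * (X b - C q2 * X a)) /
          f ((X b - X a) * (X b - C (q1 * q2) * X a)) := by
    intro a b hab
    have hZb : Z b ≠ 0 := by rw [hZ]; exact fne (X_ne_zero (s := b))
    have h3 : f (X b - X a) ≠ 0 := fne (X_sub_X_ne hab)
    have h4 : f (X b - C (q1 * q2) * X a) ≠ 0 := fne (X_sub_CX_ne _ hab)
    have e1 : 1 - Z a / Z b * f (C q1) = f (X b - C q1 * X a) / Z b := by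
      rw [map_sub, map_mul f, ← hZ a, ← hZ b]
      field_simp
      try ring
    have e2 : 1 - Z a / Z b * f (C q2) = f (X b - C q2 * X a) / Z b := by
      rw [map_sub, map_mul f, ← hZ a, ← hZ b]
      field_simp
      try ring
    have e3 : 1 - Z a / Z b = f (X b - X a) / Z b := by
      rw [map_sub, ← hZ a, ← hZ b]
      field_simp
      try ring
    have e4 : 1 - Z a / Z b * f (C (q1 * q2)) = f (X b - C (q1 * q2) * X a) / Z b := by
      rw [map_sub, map_mul f, ← hZ a, ← hZ b]
      field_simp
      try ring
    rw [hzeta, e1, e2, e3, e4, map_mul f, map_mul f]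
    rw [div_eq_div_iff (mul_ne_zero (div_ne_zero h3 hZb) (div_ne_zero h4 hZb))
      (mul_ne_zero h3 h4)]
    field_simp
  -- the per-permutation identity
  have hper : ∀ σ : Equiv.Perm (Fin n),
      (∏ pr ∈ Pn n, zeta (Z (σ pr.1) / Z (σ pr.2))) *
        (∏ pr ∈ Pn n, ((Z pr.1 - f (C (q1 * q2)) * Z pr.2) *
          (Z pr.2 - f (C (q1 * q2)) * Z pr.1))) *
        f (vand K n)
      = f (((Equiv.Perm.sign σ : ℤ) : MvPolynomial (Fin n) K) *
          rename ⇑σ (Gpoly K n q1 q2)) := by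
    intro σ
    have hmem : ∀ pr : Fin n × Fin n, pr ∈ Pn n → σ pr.1 ≠ σ pr.2 := by
      intro pr hpr
      simp only [Pn, Finset.mem_filter, Finset.mem_univ, true_and] at hpr
      exact fun h => (ne_of_lt hpr) (σ.injective h)
    have hz : ∏ pr ∈ Pn n, zeta (Z (σ pr.1) / Z (σ pr.2))
        = f (rename ⇑σ (Gnum K n q1 q2)) /
          (f (rename ⇑σ (vand K n)) * f (rename ⇑σ (Dq K n (q1 * q2)))) := by
      calc ∏ pr ∈ Pn n, zeta (Z (σ pr.1) / Z (σ pr.2))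
          = ∏ pr ∈ Pn n,
            (f ((X (σ pr.2) - C q1 * X (σ pr.1)) * (X (σ pr.2) - C q2 * X (σ pr.1))) /
              f (((X (σ pr.2) - X (σ pr.1)) * (X (σ pr.2) - C (q1 * q2) * X (σ pr.1))))) :=
            Finset.prod_congr rfl fun pr hpr => hzp _ _ (hmem pr hpr)
        _ = (∏ pr ∈ Pn n,
              f ((X (σ pr.2) - C q1 * X (σ pr.1)) * (X (σ pr.2) - C q2 * X (σ pr.1)))) /
            (∏ pr ∈ Pn n,
              f (((X (σ pr.2) - X (σ pr.1)) * (X (σ pr.2) - C (q1 * q2) * X (σ pr.1))))) :=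
            Finset.prod_div_distrib _ _
        _ = f (rename ⇑σ (Gnum K n q1 q2)) /
            (f (rename ⇑σ (vand K n)) * f (rename ⇑σ (Dq K n (q1 * q2)))) := by
            have hnum : (∏ pr ∈ Pn n,
                f ((X (σ pr.2) - C q1 * X (σ pr.1)) * (X (σ pr.2) - C q2 * X (σ pr.1))))
                = f (rename ⇑σ (Gnum K n q1 q2)) := by
              rw [← map_prod, rename_Gnum]
            have hden : (∏ pr ∈ Pn n,
                f (((X (σ pr.2) - X (σ pr.1)) * (X (σ pr.2) - C (q1 * q2) * X (σ pr.1)))))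
                = f (rename ⇑σ (vand K n)) * f (rename ⇑σ (Dq K n (q1 * q2))) := by
              rw [← map_prod, Finset.prod_mul_distrib, map_mul f, rename_vand_prod, rename_Dq]
            rw [hnum, hden]
    have hcomp : (∏ pr ∈ Pn n, ((Z pr.1 - f (C (q1 * q2)) * Z pr.2) *
          (Z pr.2 - f (C (q1 * q2)) * Z pr.1)))
        = f (rename ⇑σ (Dq' K n (q1 * q2))) * f (rename ⇑σ (Dq K n (q1 * q2))) := by
      have h1 : (∏ pr ∈ Pn n, ((Z pr.1 - f (C (q1 * q2)) * Z pr.2) *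
            (Z pr.2 - f (C (q1 * q2)) * Z pr.1))) = f (Wp K n (q1 * q2)) := by
        rw [Wp, map_prod]
        refine Finset.prod_congr rfl fun pr hpr => ?_
        simp [map_mul, map_sub, hZ]
      rw [h1, ← map_mul f, ← map_mul, ← Wp_eq, rename_Wp]
    rw [hz, hcomp, rename_vand, Gpoly_eq]
    simp only [map_mul, map_intCast]
    have hv : f (vand K n) ≠ 0 := fne vand_ne_zero
    have hd : f (rename ⇑σ (Dq K n (q1 * q2))) ≠ 0 := fne (Dq_ne_zero _ σ)
    have hε : ((Equiv.Perm.sign σ : ℤ) : L) * ((Equiv.Perm.sign σ : ℤ) : L) = 1 :=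
      sign_cast_sq' σ
    have hεne : ((Equiv.Perm.sign σ : ℤ) : L) ≠ 0 := by
      rcases Int.units_eq_one_or (Equiv.Perm.sign σ) with h | h <;> simp [h]
    field_simp
    linear_combination (-(f (rename ⇑σ (Gnum K n q1 q2)) * f (rename ⇑σ (Dq' K n (q1 * q2))))) * hε
  have hsum : (∑ σ : Equiv.Perm (Fin n), ∏ pr ∈ Pn n, zeta (Z (σ pr.1) / Z (σ pr.2))) *
      (∏ pr ∈ Pn n, ((Z pr.1 - f (C (q1 * q2)) * Z pr.2) *
        (Z pr.2 - f (C (q1 * q2)) * Z pr.1))) *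
      f (vand K n) = f (Mpoly K n q1 q2) := by
    rw [Finset.sum_mul, Finset.sum_mul, Mpoly, map_sum]
    exact Finset.sum_congr rfl fun σ _ => hper σ
  have hv : f (vand K n) ≠ 0 := fne vand_ne_zero
  apply mul_right_cancel₀ hv
  rw [hsum, hM, map_mul]
  ring
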